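/- Let κ be an infinite cardinal with κ^{<κ} = κ, ψ a sentence of Σ¹₁(L_{κ⁺κ}) (i.e., of the form ∃R̄ φ(R̄) where R̄ is a set of ≤ κ new relation symbols and φ(R̄) ∈ L_{κ⁺κ} in the expanded language), and F a fragment of L_{κ⁺κ}. Then X^ψ_F = {i_F(𝔄) : 𝔄 ∈ Mod_κ(ψ)} is a κ-analytic subset of the generalized Cantor space ^F2, where Mod_κ(ψ) is the set of models of ψ with domain κ. -/

import Mathlib

noncomputable section

open Cardinal Set

/-- The index type: a well-ordered set of order type (the initial ordinal of) `κ`. -/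
abbrev Idx (κ : Cardinal.{0}) : Type := κ.ord.ToType

/-- The generalized Baire space `^κκ` (as a plain function type). -/
abbrev GBPt (κ : Cardinal.{0}) : Type := Idx κ → Idx κ

/-- An element of `^{<κ}κ`: a sequence of length `len < κ`. -/
structure PSeq (κ : Cardinal.{0}) : Type where
  len : Idx κ
  val : ∀ i : Idx κ, i < len → Idx κ

namespace PSeq

/-- `p ⊆ q` for partial sequences: `q` extends `p`. -/
def le {κ : Cardinal.{0}} (p q : PSeq κ) : Prop :=
  ∃ h : p.len ≤ q.len, ∀ i (hi : i < p.len), q.val i (lt_of_lt_of_le hi h) = p.val i hi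

end PSeq

/-- The basic open set `N_p = {x ∈ ^κκ : p ⊆ x}`. -/
def Nbhd {κ : Cardinal.{0}} (p : PSeq κ) : Set (GBPt κ) :=
  {x | ∀ i (hi : i < p.len), x i = p.val i hi}

/-- The κ-Baire topology on `^κκ`, generated by the sets `N_p`. -/
def kBaire (κ : Cardinal.{0}) : TopologicalSpace (GBPt κ) :=
  TopologicalSpace.generateFrom (Set.range (Nbhd (κ := κ)))

/-- The product topology `τ_p` on `^κκ` (κ discrete). -/
def tauP (κ : Cardinal.{0}) : TopologicalSpace (GBPt κ) :=
  @Pi.topologicalSpace (Idx κ) (fun _ => Idx κ) (fun _ => ⊥)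

/-- The generalized Cantor space `^κ2`. -/
abbrev GCPt (κ : Cardinal.{0}) : Type := Idx κ → Bool

/-- A binary sequence of length `< κ`. -/
structure PSeq2 (κ : Cardinal.{0}) : Type where
  len : Idx κ
  val : ∀ i : Idx κ, i < len → Bool

def Nbhd2 {κ : Cardinal.{0}} (p : PSeq2 κ) : Set (GCPt κ) :=
  {x | ∀ i (hi : i < p.len), x i = p.val i hi}

/-- The topology of the generalized Cantor space `^κ2`. -/
def kCantor (κ : Cardinal.{0}) : TopologicalSpace (GCPt κ) :=
  TopologicalSpace.generateFrom (Set.range (Nbhd2 (κ := κ)))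

/-- Restriction `x ↾ α ∈ ^{<κ}κ` of `x ∈ ^κκ`. -/
def restr {κ : Cardinal.{0}} (x : GBPt κ) (α : Idx κ) : PSeq κ :=
  ⟨α, fun i _ => x i⟩

/-- A splitting node of a tree `T ⊆ ^{<κ}κ`. -/
def Splits {κ : Cardinal.{0}} (T : Set (PSeq κ)) (q : PSeq κ) : Prop :=
  ∃ q₀ ∈ T, ∃ q₁ ∈ T, q.le q₀ ∧ q.le q₁ ∧ ¬ q₀.le q₁ ∧ ¬ q₁.le q₀

/-- A κ-perfect tree: a nonempty subtree of `^{<κ}κ` closed under initial segments,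
whose splitting nodes are cofinal, and which is `<κ`-closed. -/
def IsPerfectTree (κ : Cardinal.{0}) (T : Set (PSeq κ)) : Prop :=
  T.Nonempty ∧
  (∀ p ∈ T, ∀ β : Idx κ, ∀ h : β ≤ p.len,
      (⟨β, fun i hi => p.val i (lt_of_lt_of_le hi h)⟩ : PSeq κ) ∈ T) ∧
  (∀ p ∈ T, ∃ q ∈ T, p.le q ∧ Splits T q) ∧
  (∀ β : Ordinal, β < κ.ord → ∀ f : ∀ i : Ordinal, i < β → PSeq κ,
      (∀ i hi, f i hi ∈ T) →
      (∀ i hi j hj, i ≤ j → (f i hi).le (f j hj)) →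
      ∃ q ∈ T, ∀ i hi, (f i hi).le q)

/-- The set of κ-branches of a tree `T ⊆ ^{<κ}κ`. -/
def branches {κ : Cardinal.{0}} (T : Set (PSeq κ)) : Set (GBPt κ) :=
  {x | ∀ α : Idx κ, restr x α ∈ T}

/-- A κ-perfect subset of `^κκ`: the set of κ-branches of a κ-perfect tree. -/
def KPerfect (κ : Cardinal.{0}) (Y : Set (GBPt κ)) : Prop :=
  ∃ T : Set (PSeq κ), IsPerfectTree κ T ∧ Y = branches T

/-- A κ-analytic subset of `^κκ`: a continuous image of a closed subset of `^κκ`. -/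
def KAnalytic (κ : Cardinal.{0}) (X : Set (GBPt κ)) : Prop :=
  ∃ C : Set (GBPt κ), @IsClosed _ (kBaire κ) C ∧
    ∃ f : GBPt κ → GBPt κ, @Continuous _ _ (kBaire κ) (kBaire κ) f ∧ X = f '' C

/-- `I` is a κ⁺-complete non-principal ideal on the set `B`. -/
structure IsKIdeal {α : Type} (κ : Cardinal.{0}) (B : Set α) (I : Set (Set α)) : Prop where
  subset_base : ∀ A ∈ I, A ⊆ B
  mono : ∀ A ∈ I, ∀ A' : Set α, A' ⊆ A → A' ∈ I
  complete : ∀ f : Idx κ → Set α, (∀ i, f i ∈ I) → (⋃ i, f i) ∈ I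
  nonprincipal : ∀ b ∈ B, ({b} : Set α) ∈ I
  proper : B ∉ I

/-- `I⁺`, the `I`-positive subsets of `B`. -/
def IPos {α : Type} (B : Set α) (I : Set (Set α)) : Set (Set α) :=
  {A | A ⊆ B ∧ A ∉ I}

/-- `K` is closed under lower bounds of descending sequences of length `< κ`. -/
def ChainClosed {α : Type} (κ : Cardinal.{0}) (K : Set (Set α)) : Prop :=
  ∀ β : Ordinal, β < κ.ord → ∀ f : ∀ i : Ordinal, i < β → Set α,
    (∀ i hi, f i hi ∈ K) →
    (∀ i hi j hj, i ≤ j → f j hj ⊆ f i hi) →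
    ∃ C ∈ K, ∀ i hi, C ⊆ f i hi

/-- The hypothesis `I⁻κ`: there is a κ⁺-complete normal non-principal ideal `I` on κ⁺
whose positive sets contain a dense subset `K` closed under lower bounds of
`<κ`-descending sequences. -/
def IminusHyp (κ : Cardinal.{0}) : Prop :=
  ∃ I : Set (Set (Idx (Order.succ κ))),
    IsKIdeal κ Set.univ I ∧
    (∀ f : Idx (Order.succ κ) → Set (Idx (Order.succ κ)), (∀ i, f i ∈ I) →
      {a | ∃ b, b < a ∧ a ∈ f b} ∈ I) ∧
    ∃ K ⊆ IPos Set.univ I,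
      (∀ A ∈ IPos Set.univ I, ∃ C ∈ K, C ⊆ A) ∧ ChainClosed κ K

/-- Closed unbounded subsets of the index set. -/
def IsClub' {κ : Cardinal.{0}} (C : Set (Idx κ)) : Prop :=
  (∀ a : Idx κ, ∃ b ∈ C, a < b) ∧
  (∀ a : Idx κ, (C ∩ Iio a).Nonempty → IsLUB (C ∩ Iio a) a → a ∈ C)

def IsStationary' {κ : Cardinal.{0}} (S : Set (Idx κ)) : Prop :=
  ∀ C : Set (Idx κ), IsClub' C → (S ∩ C).Nonempty

/-- The diamond principle `◊_κ`. -/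
def DiamondK (κ : Cardinal.{0}) : Prop :=
  ∃ A : Idx κ → Set (Idx κ), (∀ i, A i ⊆ Iio i) ∧
    ∀ S : Set (Idx κ), IsStationary' {i | S ∩ Iio i = A i}

/-- The product topology on `ⁿ(^κκ)`. -/
def nTop (κ : Cardinal.{0}) (n : ℕ) : TopologicalSpace (Fin n → GBPt κ) :=
  @Pi.topologicalSpace (Fin n) (fun _ => GBPt κ) (fun _ => kBaire κ)

/-- The n-fold product `ⁿX`. -/
def nProdIn (κ : Cardinal.{0}) (n : ℕ) (X : Set (GBPt κ)) : Set (Fin n → GBPt κ) :=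
  {x | ∀ i, x i ∈ X}

/-- `R` is a `Σ⁰₂(κ)` (i.e. `F_σ(κ)`) n-ary relation on `X`:
a union of at most κ many relatively closed subsets of `ⁿX`. -/
def FsigmaOn (κ : Cardinal.{0}) (n : ℕ) (X : Set (GBPt κ)) (R : Set (Fin n → GBPt κ)) : Prop :=
  R ⊆ nProdIn κ n X ∧
  ∃ f : Idx κ → Set (Fin n → GBPt κ), (∀ i, @IsClosed _ (nTop κ n) (f i)) ∧
    R = (⋃ i, f i) ∩ nProdIn κ n X

/-- `Y` is `R`-independent: no tuple of pairwise distinct elements of `Y` lies in `R`. -/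
def RIndep (κ : Cardinal.{0}) (n : ℕ) (R : Set (Fin n → GBPt κ)) (Y : Set (GBPt κ)) : Prop :=
  ∀ y : Fin n → GBPt κ, (∀ i, y i ∈ Y) → Function.Injective y → y ∉ R

/-- Binary version of independence. -/
def RIndep2 (κ : Cardinal.{0}) (R : Set (GBPt κ × GBPt κ)) (Y : Set (GBPt κ)) : Prop :=
  ∀ x ∈ Y, ∀ y ∈ Y, x ≠ y → (x, y) ∉ R

/-- `C` is κ-compact (in the topology `τ`): every open cover has a subcover of size `< κ`. -/
def KCompactIn {α : Type u} (κ : Cardinal.{0}) (τ : TopologicalSpace α) (C : Set α) : Prop :=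
  ∀ 𝒰 : Set (Set α), (∀ U ∈ 𝒰, @IsOpen _ τ U) → C ⊆ ⋃₀ 𝒰 →
    ∃ 𝒱 ⊆ 𝒰, Cardinal.mk 𝒱 < Cardinal.lift.{u} κ ∧ C ⊆ ⋃₀ 𝒱

/-- `C` is `K_κ`: a union of at most κ many κ-compact sets. -/
def KKappaIn {α : Type u} (κ : Cardinal.{0}) (τ : TopologicalSpace α) (C : Set α) : Prop :=
  ∃ f : Idx κ → Set α, (∀ i, KCompactIn κ τ (f i)) ∧ C = ⋃ i, f i

end

/-! ## Infinitary logic `L_{κ⁺κ}` over a relational language -/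

/-- A relational first-order language (finitary relation symbols only). -/
structure RelLang : Type 1 where
  Sym : Type
  ar : Sym → ℕ

/-- Formulas of `L_{κ⁺κ}` over the relational language `L`, with variables `v_i`, `i ∈ κ`:
atomic formulas, negation, conjunctions of at most κ many formulas, and existential
quantification over `< κ` many variables. -/
inductive Fml (L : RelLang) (κ : Cardinal.{0}) : Type 1
  | eq : Idx κ → Idx κ → Fml L κ
  | rel (R : L.Sym) (v : Fin (L.ar R) → Idx κ) : Fml L κ
  | not (φ : Fml L κ) : Fml L κ
  | conj (ι : Type) (hι : Cardinal.mk ι ≤ κ) (f : ι → Fml L κ) : Fml L κ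
  | ex (V : Set (Idx κ)) (hV : Cardinal.mk V < κ) (φ : Fml L κ) : Fml L κ

/-- An `L`-structure with domain `κ`. -/
def Struc (L : RelLang) (κ : Cardinal.{0}) : Type :=
  ∀ R : L.Sym, (Fin (L.ar R) → Idx κ) → Prop

/-- Satisfaction `M ⊨ φ[a]` for a valuation `a ∈ ^κκ`. -/
def Sat {L : RelLang} {κ : Cardinal.{0}} (M : Struc L κ) :
    Fml L κ → (Idx κ → Idx κ) → Prop
  | .eq i j, a => a i = a j
  | .rel R v, a => M R (fun k => a (v k))
  | .not φ, a => ¬ Sat M φ a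
  | .conj _ _ f, a => ∀ t, Sat M (f t) a
  | .ex V _ φ, a => ∃ b : Idx κ → Idx κ, (∀ i, i ∉ V → b i = a i) ∧ Sat M φ b

/-- `s_h φ`: simultaneous substitution of `v_{h(i)}` for `v_i`. -/
def Fml.subst {L : RelLang} {κ : Cardinal.{0}} (h : Idx κ → Idx κ) :
    Fml L κ → Fml L κ
  | .eq i j => .eq (h i) (h j)
  | .rel R v => .rel R (h ∘ v)
  | .not φ => .not (φ.subst h)
  | .conj ι hι f => .conj ι hι (fun t => (f t).subst h)
  | .ex V hV φ => .ex (h '' V) (lt_of_le_of_lt Cardinal.mk_image_le hV) (φ.subst h)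

/-- The subformula relation. -/
inductive Subf {L : RelLang} {κ : Cardinal.{0}} : Fml L κ → Fml L κ → Prop
  | refl (φ : Fml L κ) : Subf φ φ
  | not {φ ψ : Fml L κ} : Subf ψ φ → Subf ψ (.not φ)
  | conj {ι hι f ψ} (t : ι) : Subf ψ (f t) → Subf ψ (.conj ι hι f)
  | ex {V hV φ ψ} : Subf ψ φ → Subf ψ (.ex V hV φ)

/-- The free variables of a formula. -/
def Fml.freeVars {L : RelLang} {κ : Cardinal.{0}} : Fml L κ → Set (Idx κ)
  | .eq i j => {i, j}
  | .rel _ v => Set.range v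
  | .not φ => φ.freeVars
  | .conj _ _ f => ⋃ t, (f t).freeVars
  | .ex V _ φ => φ.freeVars \ V

/-- Atomic formulas. -/
def Fml.IsAtomic {L : RelLang} {κ : Cardinal.{0}} (φ : Fml L κ) : Prop :=
  (∃ i j, φ = .eq i j) ∨ ∃ R v, φ = .rel R v

/-- A fragment of `L_{κ⁺κ}`: a κ-sized set of `L_{κ⁺κ}`-formulas (in particular each
formula has `< κ` free variables) containing all atomic formulas and closed under
negation, subformulas and substitution of variables. -/
structure IsFragment {L : RelLang} (κ : Cardinal.{0}) (F : Set (Fml L κ)) : Prop where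
  card : Cardinal.mk F = Cardinal.lift.{1} κ
  atom : ∀ φ : Fml L κ, φ.IsAtomic → φ ∈ F
  neg : ∀ φ ∈ F, Fml.not φ ∈ F
  subf : ∀ φ ∈ F, ∀ ψ, Subf ψ φ → ψ ∈ F
  substc : ∀ φ ∈ F, ∀ h : Idx κ → Idx κ, φ.subst h ∈ F
  smallFree : ∀ φ ∈ F, Cardinal.mk φ.freeVars < κ

/-- The set `Mod_κ(φ, a)` of models of `φ` under the valuation `a`. -/
def ModSet {L : RelLang} {κ : Cardinal.{0}} (φ : Fml L κ) (a : Idx κ → Idx κ) :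
    Set (Struc L κ) := {M | Sat M φ a}

/-- The topology `t_F` on `Mod_κ(L)`: generated by intersections of `< κ` many of the
sets `Mod_κ(φ, a)`, `φ ∈ F`, `a ∈ ^κκ`. -/
def tF {L : RelLang} (κ : Cardinal.{0}) (F : Set (Fml L κ)) :
    TopologicalSpace (Struc L κ) :=
  TopologicalSpace.generateFrom
    {s | ∃ (ι : Type) (φ : ι → Fml L κ) (a : ι → (Idx κ → Idx κ)),
      Cardinal.mk ι < κ ∧ (∀ t, φ t ∈ F) ∧ s = ⋂ t, ModSet (φ t) (a t)}

/-- The map `i_F : Mod_κ(L) → ^F2`. -/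
def iF {L : RelLang} (κ : Cardinal.{0}) (F : Set (Fml L κ)) (M : Struc L κ) :
    F → Prop :=
  fun φ => Sat M φ.1 id

/-- The generalized Cantor space topology on `^F2`: basic open sets are determined
by `< κ` many coordinates. -/
def cantF {L : RelLang} (κ : Cardinal.{0}) (F : Set (Fml L κ)) :
    TopologicalSpace (F → Prop) :=
  TopologicalSpace.generateFrom
    {s | ∃ (P : Set F) (g : ∀ p : P, Prop),
      Cardinal.mk P < Cardinal.lift.{1} κ ∧ s = {x | ∀ p : P, x p.1 = g p}}

/-- `X` is `G_δ(κ)` w.r.t. the topology `τ`: an intersection of at most κ many opens. -/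
def GdeltaIn {α : Type u} (κ : Cardinal.{0}) (τ : TopologicalSpace α) (X : Set α) : Prop :=
  ∃ U : Idx κ → Set α, (∀ i, @IsOpen _ τ (U i)) ∧ X = ⋂ i, U i

/-- `X` is κ-analytic w.r.t. the topology `τ`: a continuous image of a closed
subset of the κ-Baire space. -/
def KAnalyticIn {α : Type u} (κ : Cardinal.{0}) (τ : TopologicalSpace α) (X : Set α) : Prop :=
  ∃ C : Set (GBPt κ), @IsClosed _ (kBaire κ) C ∧
    ∃ f : GBPt κ → α, @Continuous _ _ (kBaire κ) τ f ∧ X = f '' C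

/-- Sum of two relational languages (adding new symbols). -/
def RelLang.sum (L L' : RelLang) : RelLang :=
  ⟨L.Sym ⊕ L'.Sym, Sum.elim L.ar L'.ar⟩

/-- The set of models (with domain κ) of the `Σ¹₁(L_{κ⁺κ})` sentence `∃ R̄ φ(R̄)`,
where `φ` is an `L_{κ⁺κ}`-sentence in the language `L.sum L₂` expanded by the
new symbols `L₂`. -/
def ModPsi {L : RelLang} {κ : Cardinal.{0}} (L₂ : RelLang) (φ : Fml (L.sum L₂) κ) :
    Set (Struc L κ) :=
  {M | ∃ M' : Struc (L.sum L₂) κ,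
    (∀ (R : L.Sym) (v : Fin (L.ar R) → Idx κ), M' (Sum.inl R) v = M R v) ∧
    Sat M' φ id}

/-- The set of injective elements of `^κκ`. -/
def InjK (κ : Cardinal.{0}) : Set (GBPt κ) := {h | Function.Injective h}

/-- `A` is `(F,H)`-elementarily embeddable into `B`. -/
def FHEmb {L : RelLang} {κ : Cardinal.{0}} (F : Set (Fml L κ)) (H : Set (GBPt κ))
    (A B : Struc L κ) : Prop :=
  ∃ h ∈ H, ∀ φ ∈ F, ∀ a : Idx κ → Idx κ, Sat A φ a ↔ Sat B φ (h ∘ a)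

/-- A κ-perfect subset of the space `(α, τ)`: the range of a continuous injection
of the generalized Cantor space `^κ2`. -/
def PerfectIn {α : Type u} (κ : Cardinal.{0}) (τ : TopologicalSpace α) (Y : Set α) : Prop :=
  ∃ r : GCPt κ → α, @Continuous _ _ (kCantor κ) τ r ∧ Function.Injective r ∧
    Y = Set.range r

/-- The κ-Borel sets of the space `(α, τ)`. -/
inductive KBorel {α : Type u} (κ : Cardinal.{0}) (τ : TopologicalSpace α) : Set α → Prop
  | basic (s : Set α) : @IsOpen _ τ s → KBorel κ τ s
  | compl (s : Set α) : KBorel κ τ s → KBorel κ τ sᶜ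
  | iUnion (f : Idx κ → Set α) : (∀ i, KBorel κ τ (f i)) → KBorel κ τ (⋃ i, f i)

/-! ## Auxiliary infrastructure for stmt_16 -/

namespace Stmt16

open Cardinal Set

variable {κ : Cardinal.{0}}

lemma mk_Idx (κ : Cardinal.{0}) : #(Idx κ) = κ := by
  simpa [Idx] using Cardinal.mk_toType κ.ord

lemma infinite_Idx (hκ : ℵ₀ ≤ κ) : Infinite (Idx κ) := by
  rw [Cardinal.infinite_iff, mk_Idx]; exact hκ

/-- Any subset of `Idx κ` of size `< κ` is strictly bounded (uses `κ^{<κ} = κ`,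
which implies regularity). -/
lemma bdd_of_small (hκ : ℵ₀ ≤ κ) (hκκ : κ ^< κ = κ) {D : Set (Idx κ)} (hD : #D < κ) :
    ∃ α : Idx κ, ∀ i ∈ D, i < α := by
  have hreg : κ ≤ κ.ord.cof := by
    by_contra h
    push_neg at h
    have h1 : κ < κ ^ κ.ord.cof := Cardinal.lt_power_cof hκ
    have h2 : κ ^ κ.ord.cof ≤ κ ^< κ := Cardinal.le_powerlt κ h
    rw [hκκ] at h2
    exact absurd (h1.trans_le h2) (lt_irrefl κ)
  have hlim : Order.IsSuccLimit κ.ord := Cardinal.isSuccLimit_ord hκ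
  -- map to ordinals
  set e := Ordinal.ToType.mk (o := κ.ord) with he
  have hf : ∀ i : D, ((e.symm i.1).1 + 1) < κ.ord := fun i =>
    hlim.succ_lt (e.symm i.1).2
  have hsup : (⨆ i : D, ((e.symm i.1).1 + 1)) < κ.ord := by
    apply Ordinal.iSup_lt_ord _ hf
    exact hD.trans_le hreg
  refine ⟨e ⟨_, hsup⟩, fun i hi => ?_⟩
  have h1 : (e.symm i).1 + 1 ≤ ⨆ i : D, ((e.symm i.1).1 + 1) :=
    Ordinal.le_iSup (fun i : D => ((e.symm i.1).1 + 1)) ⟨i, hi⟩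
  have h2 : (e.symm i).1 < (⨆ i : D, ((e.symm i.1).1 + 1)) := lt_of_lt_of_le (Order.lt_succ _) h1
  have : e.symm i < (⟨_, hsup⟩ : Set.Iio κ.ord) := h2
  simpa using (e.symm.lt_iff_lt).mp (by simpa using this)

/-- Locally determined (by `<κ` many coordinates) sets. -/
def LocOpen (κ : Cardinal.{0}) (S : Set (GBPt κ)) : Prop :=
  ∀ x ∈ S, ∃ D : Set (Idx κ), #D < κ ∧ ∀ y : GBPt κ, (∀ i ∈ D, y i = x i) → y ∈ S

def LocClosed (κ : Cardinal.{0}) (S : Set (GBPt κ)) : Prop := LocOpen κ Sᶜ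

lemma LocClosed.iInter {ι : Sort*} {S : ι → Set (GBPt κ)} (h : ∀ j, LocClosed κ (S j)) :
    LocClosed κ (⋂ j, S j) := by
  intro x hx
  rw [mem_compl_iff, mem_iInter] at hx
  push_neg at hx
  obtain ⟨j, hj⟩ := hx
  obtain ⟨D, hD, hyy⟩ := h j x hj
  exact ⟨D, hD, fun y hy hmem => hyy y hy (by rw [mem_iInter] at hmem; exact hmem j)⟩

lemma LocClosed.inter {S T : Set (GBPt κ)} (hS : LocClosed κ S) (hT : LocClosed κ T) :
    LocClosed κ (S ∩ T) := by
  intro x hx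
  by_cases h : x ∈ S
  case neg =>
    obtain ⟨D, hD, hy⟩ := hS x h
    exact ⟨D, hD, fun y hyD hmem => hy y hyD hmem.1⟩
  have h' : x ∉ T := fun ht => hx ⟨h, ht⟩
  obtain ⟨D, hD, hy⟩ := hT x h'
  exact ⟨D, hD, fun y hyD hmem => hy y hyD hmem.2⟩

lemma isOpen_of_locOpen (hκ : ℵ₀ ≤ κ) (hκκ : κ ^< κ = κ) {S : Set (GBPt κ)}
    (h : LocOpen κ S) : @IsOpen _ (kBaire κ) S := by
  letI := kBaire κ
  have : S = ⋃₀ {U | (∃ p, U = Nbhd p) ∧ U ⊆ S} := by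
    apply Subset.antisymm
    · intro x hx
      obtain ⟨D, hD, hy⟩ := h x hx
      obtain ⟨α, hα⟩ := bdd_of_small hκ hκκ hD
      refine mem_sUnion.mpr ⟨Nbhd (restr x α), ⟨⟨_, rfl⟩, ?_⟩, ?_⟩
      · intro y hy'
        exact hy y fun i hi => hy' i (hα i hi)
      · intro i hi; rfl
    · exact sUnion_subset fun U hU => hU.2
  rw [this]
  apply isOpen_sUnion
  rintro U ⟨⟨p, rfl⟩, -⟩
  exact TopologicalSpace.isOpen_generateFrom_of_mem ⟨p, rfl⟩

lemma isClosed_of_locClosed (hκ : ℵ₀ ≤ κ) (hκκ : κ ^< κ = κ) {S : Set (GBPt κ)}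
    (h : LocClosed κ S) : @IsClosed _ (kBaire κ) S := by
  letI := kBaire κ
  rw [← isOpen_compl_iff]
  exact isOpen_of_locOpen hκ hκκ h

end Stmt16
namespace Stmt16
open Cardinal Set

variable {κ : Cardinal.{0}} {L : RelLang}

/-- Coordinate index type for the verification data of a formula. -/
def Crd : Fml L κ → Type
  | .eq _ _ => PUnit
  | .rel _ _ => PUnit
  | .not ψ => PUnit ⊕ Crd ψ
  | .conj ι _ f => Bool ⊕ Σ t : ι, Crd (f t)
  | .ex V _ ψ => (PUnit ⊕ ↥V) ⊕ ((↥V → Idx κ) × Crd ψ)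

/-- The root "claim" coordinate. -/
def claimC : (ψ : Fml L κ) → Crd ψ
  | .eq _ _ => PUnit.unit
  | .rel _ _ => PUnit.unit
  | .not _ => Sum.inl PUnit.unit
  | .conj _ _ _ => Sum.inl true
  | .ex _ _ _ => Sum.inl (Sum.inl PUnit.unit)

lemma crd_le (hκ : ℵ₀ ≤ κ) (hκκ : κ ^< κ = κ) : ∀ ψ : Fml L κ, #(Crd ψ) ≤ κ := by
  intro ψ
  induction ψ with
  | eq i j => exact le_trans (le_of_eq Cardinal.mk_punit) (Cardinal.one_le_aleph0.trans hκ)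
  | rel R v => exact le_trans (le_of_eq Cardinal.mk_punit) (Cardinal.one_le_aleph0.trans hκ)
  | not ψ ih =>
      show #(PUnit ⊕ Crd ψ) ≤ κ
      rw [Cardinal.mk_sum]
      refine le_trans (add_le_add (by simpa using (Cardinal.one_le_aleph0.trans hκ)) (by simpa using ih))
        (le_of_eq (Cardinal.add_eq_self hκ))
  | conj ι hι f ih =>
      show #(Bool ⊕ Σ t : ι, Crd (f t)) ≤ κ
      rw [Cardinal.mk_sum]
      have h1 : #(Σ t : ι, Crd (f t)) ≤ κ := by
        rw [Cardinal.mk_sigma]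
        refine le_trans (Cardinal.sum_le_sum _ (fun _ => κ) fun t => (ih t)) ?_
        rw [Cardinal.sum_const']
        exact le_trans (mul_le_mul_left hι κ) (le_of_eq (Cardinal.mul_eq_self hκ))
      refine le_trans (add_le_add ?_ (by simpa using h1)) (le_of_eq (Cardinal.add_eq_self hκ))
      · simpa using le_trans (le_of_lt (Cardinal.lt_aleph0_of_finite Bool)) hκ
  | ex V hV ψ ih =>
      show #((PUnit ⊕ ↥V) ⊕ ((↥V → Idx κ) × Crd ψ)) ≤ κ
      rw [Cardinal.mk_sum, Cardinal.mk_sum, Cardinal.mk_prod]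
      have h1 : #(↥V → Idx κ) ≤ κ := by
        calc #(↥V → Idx κ) = κ ^ #↥V := by rw [← Cardinal.power_def, mk_Idx]
          _ ≤ κ ^< κ := Cardinal.le_powerlt κ hV
          _ = κ := hκκ
      have h2 : Cardinal.lift.{0} #(↥V → Idx κ) * Cardinal.lift.{0} #(Crd ψ) ≤ κ := by
        simp only [Cardinal.lift_id]
        exact le_trans (mul_le_mul' h1 ih) (le_of_eq (Cardinal.mul_eq_self hκ))
      have h3 : Cardinal.lift.{0} #PUnit + Cardinal.lift.{0} #↥V ≤ κ := by
        simp only [Cardinal.lift_id, Cardinal.mk_punit]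
        exact le_trans (add_le_add (Cardinal.one_le_aleph0.trans hκ) hV.le)
          (le_of_eq (Cardinal.add_eq_self hκ))
      simp only [Cardinal.lift_id] at h2 h3 ⊢
      exact le_trans (add_le_add h3 h2) (le_of_eq (Cardinal.add_eq_self hκ))

end Stmt16
namespace Stmt16
open Cardinal Set Classical

variable {κ : Cardinal.{0}} {L : RelLang}

/-- A chosen surjection `Idx κ → ι` for a nonempty type of size `≤ κ`. -/
noncomputable def cemb {ι : Type} (hι : #ι ≤ κ) : ι ↪ Idx κ :=
  Classical.choice (Cardinal.le_def _ _ |>.mp (by rwa [mk_Idx]))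

noncomputable def csur {ι : Type} (hι : #ι ≤ κ) (h : Nonempty ι) : Idx κ → ι :=
  haveI := h
  Function.invFun (cemb hι)

lemma csur_surj {ι : Type} (hι : #ι ≤ κ) (h : Nonempty ι) : Function.Surjective (csur hι h) :=
  haveI := h
  Function.invFun_surjective (cemb hι).2

/-- Encoding of a proposition as an element of `Idx κ`. -/
noncomputable def enc (z o : Idx κ) (p : Prop) : Idx κ := if p then o else z

lemma enc_spec {z o : Idx κ} (hzo : o ≠ z) (p : Prop) : (enc z o p ≠ z) ↔ p := by
  unfold enc
  by_cases hp : p <;> simp [hp, hzo]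

/-- Override a valuation on a set `V`. -/
noncomputable def ovr {V : Set (Idx κ)} (a : Idx κ → Idx κ) (v : ↥V → Idx κ) : Idx κ → Idx κ :=
  fun i => if h : i ∈ V then v ⟨i, h⟩ else a i

lemma ovr_eq {V : Set (Idx κ)} {a b : Idx κ → Idx κ} (hb : ∀ i ∉ V, b i = a i) :
    ovr a (fun i : ↥V => b i.1) = b := by
  funext i
  unfold ovr
  by_cases h : i ∈ V <;> simp [h, hb]

/-- The closed verification conditions for the truth of all "claim" coordinates. -/
noncomputable def Cnd (z : Idx κ) (M : Struc L κ) :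
    (ψ : Fml L κ) → (a : Idx κ → Idx κ) → (w : Crd ψ → Idx κ) → Prop
  | .eq i j, a, w => ((w PUnit.unit ≠ z) ↔ (a i = a j))
  | .rel R v, a, w => ((w PUnit.unit ≠ z) ↔ M R (fun k => a (v k)))
  | .not ψ, a, w =>
      ((w (Sum.inl PUnit.unit) ≠ z) ↔ ¬ (w (Sum.inr (claimC ψ)) ≠ z)) ∧
      Cnd z M ψ a (fun c => w (Sum.inr c))
  | .conj ι hι f, a, w =>
      (∀ t : ι, (w (Sum.inl true) ≠ z) → (w (Sum.inr ⟨t, claimC (f t)⟩) ≠ z)) ∧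
      (if h : Nonempty ι then
        (¬ (w (Sum.inl true) ≠ z) →
          ¬ (w (Sum.inr ⟨csur hι h (w (Sum.inl false)),
              claimC (f (csur hι h (w (Sum.inl false))))⟩) ≠ z))
       else (w (Sum.inl true) ≠ z)) ∧
      (∀ t : ι, Cnd z M (f t) a (fun c => w (Sum.inr ⟨t, c⟩)))
  | .ex V hV ψ, a, w =>
      ((w (Sum.inl (Sum.inl PUnit.unit)) ≠ z) →
        (w (Sum.inr ⟨fun i => w (Sum.inl (Sum.inr i)), claimC ψ⟩) ≠ z)) ∧
      (∀ v : ↥V → Idx κ, ¬ (w (Sum.inl (Sum.inl PUnit.unit)) ≠ z) →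
        ¬ (w (Sum.inr ⟨v, claimC ψ⟩) ≠ z)) ∧
      (∀ v : ↥V → Idx κ, Cnd z M ψ (ovr a v) (fun c => w (Sum.inr ⟨v, c⟩)))

/-- Soundness: the conditions force every claim to be the true satisfaction value. -/
lemma sound (z : Idx κ) (M : Struc L κ) :
    ∀ (ψ : Fml L κ) (a : Idx κ → Idx κ) (w : Crd ψ → Idx κ),
      Cnd z M ψ a w → ((w (claimC ψ) ≠ z) ↔ Sat M ψ a) := by
  intro ψ
  induction ψ with
  | eq i j => intro a w h; exact h
  | rel R v => intro a w h; exact h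
  | not ψ ih =>
      intro a w h
      have h2 := ih a (fun c => w (Sum.inr c)) h.2
      show (w (Sum.inl PUnit.unit) ≠ z) ↔ ¬ Sat M ψ a
      rw [h.1, h2]
  | conj ι hι f ih =>
      intro a w h
      obtain ⟨h1, h2, h3⟩ := h
      show (w (Sum.inl true) ≠ z) ↔ ∀ t, Sat M (f t) a
      constructor
      · intro hc t
        exact (ih t a _ (h3 t)).mp (h1 t hc)
      · intro hs
        by_contra hc
        by_cases hne : Nonempty ι
        · rw [dif_pos hne] at h2
          set t := csur hι hne (w (Sum.inl false))
          exact (h2 (fun hne => hne hc)) ((ih t a _ (h3 t)).mpr (hs t))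
        · rw [dif_neg hne] at h2
          exact h2 hc
  | ex V hV ψ ih =>
      intro a w h
      obtain ⟨h1, h2, h3⟩ := h
      show (w (Sum.inl (Sum.inl PUnit.unit)) ≠ z) ↔
        ∃ b, (∀ i ∉ V, b i = a i) ∧ Sat M ψ b
      constructor
      · intro hc
        set v : ↥V → Idx κ := fun i => w (Sum.inl (Sum.inr i))
        refine ⟨ovr a v, fun i hi => by simp [ovr, hi], ?_⟩
        exact (ih (ovr a v) _ (h3 v)).mp (h1 hc)
      · rintro ⟨b, hb, hsat⟩
        by_contra hc
        set v : ↥V → Idx κ := fun i => b i.1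
        have : Sat M ψ (ovr a v) := by rw [ovr_eq hb]; exact hsat
        exact (h2 v (fun hne => hne hc)) ((ih (ovr a v) _ (h3 v)).mpr this)

end Stmt16
namespace Stmt16
open Cardinal Set Classical

variable {κ : Cardinal.{0}} {L : RelLang}

/-- Completeness: given any structure and valuation, some witness assignment
satisfies all the conditions. -/
lemma complete {z o : Idx κ} (hzo : o ≠ z) (M : Struc L κ) :
    ∀ (ψ : Fml L κ) (a : Idx κ → Idx κ), ∃ w : Crd ψ → Idx κ, Cnd z M ψ a w := by
  intro ψ
  induction ψ with
  | eq i j =>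
      intro a
      exact ⟨fun _ => enc z o (a i = a j), enc_spec hzo _⟩
  | rel R v =>
      intro a
      exact ⟨fun _ => enc z o (M R fun k => a (v k)), enc_spec hzo _⟩
  | not ψ ih =>
      intro a
      obtain ⟨w', hw'⟩ := ih a
      have hcl := sound z M ψ a w' hw'
      refine ⟨Sum.elim (fun _ => enc z o (¬ Sat M ψ a)) w', ?_, ?_⟩
      · show (enc z o (¬ Sat M ψ a) ≠ z) ↔ ¬ (w' (claimC ψ) ≠ z)
        rw [enc_spec hzo, hcl]
      · exact hw'
  | conj ι hι f ih =>
      intro a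
      choose W hW using fun t => ih t a
      have hcl : ∀ t, (W t (claimC (f t)) ≠ z) ↔ Sat M (f t) a :=
        fun t => sound z M (f t) a (W t) (hW t)
      by_cases hne : Nonempty ι
      · -- selector value
        have hsel : ∃ j : Idx κ, (¬ (∀ t, Sat M (f t) a)) →
            ¬ Sat M (f (csur hι hne j)) a := by
          by_cases hs : ∀ t, Sat M (f t) a
          · exact ⟨z, fun hc => absurd hs hc⟩
          · push_neg at hs
            obtain ⟨t₀, ht₀⟩ := hs
            obtain ⟨j, hj⟩ := csur_surj hι hne t₀
            exact ⟨j, fun _ => by rw [hj]; exact ht₀⟩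
        obtain ⟨j, hj⟩ := hsel
        refine ⟨Sum.elim (fun b => if b then enc z o (∀ t, Sat M (f t) a) else j)
          (fun p => W p.1 p.2), ?_, ?_, fun t => hW t⟩
        · intro t hc
          have hs : ∀ t, Sat M (f t) a := (enc_spec hzo _).mp hc
          exact (hcl t).mpr (hs t)
        · rw [dif_pos hne]
          intro hc hcc
          have hP : ¬ ∀ t, Sat M (f t) a := fun hs =>
            hc (show enc z o _ ≠ z from (enc_spec hzo _).mpr hs)
          exact (hj hP) ((hcl _).mp hcc)
      · refine ⟨Sum.elim (fun b => if b then o else z) (fun p => W p.1 p.2),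
          fun t => absurd ⟨t⟩ hne, ?_, fun t => hW t⟩
        rw [dif_neg hne]
        exact hzo
  | ex V hV ψ ih =>
      intro a
      choose W hW using fun v : ↥V → Idx κ => ih (ovr a v)
      have hcl : ∀ v, (W v (claimC ψ) ≠ z) ↔ Sat M ψ (ovr a v) :=
        fun v => sound z M ψ (ovr a v) (W v) (hW v)
      have hwit : ∃ wv : ↥V → Idx κ, Sat M (.ex V hV ψ) a → Sat M ψ (ovr a wv) := by
        by_cases hs : Sat M (.ex V hV ψ) a
        · obtain ⟨b, hb, hsat⟩ := hs
          exact ⟨fun i => b i.1, fun _ => by rw [ovr_eq hb]; exact hsat⟩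
        · exact ⟨fun _ => z, fun hc => absurd hc hs⟩
      obtain ⟨wv, hwv⟩ := hwit
      refine ⟨Sum.elim (Sum.elim (fun _ => enc z o (Sat M (.ex V hV ψ) a)) wv)
        (fun p => W p.1 p.2), ?_, ?_, fun v => hW v⟩
      · intro hc
        exact (hcl wv).mpr (hwv ((enc_spec hzo _).mp hc))
      · intro v hc hcc
        have hs : Sat M ψ (ovr a v) := (hcl v).mp hcc
        exact hc ((enc_spec hzo _).mpr ⟨ovr a v, fun i hi => by simp [ovr, hi], hs⟩)

end Stmt16
namespace Stmt16
open Cardinal Set Classical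

variable {κ : Cardinal.{0}} {L : RelLang}

lemma small_finite (hκ : ℵ₀ ≤ κ) {s : Set (Idx κ)} (hs : s.Finite) : #s < κ :=
  hs.lt_aleph0.trans_le hκ

/-- Local closedness of the condition set. -/
lemma cnd_loc (hκ : ℵ₀ ≤ κ) (z : Idx κ)
    (mA : (Σ R : L.Sym, (Fin (L.ar R) → Idx κ)) → Idx κ) :
    ∀ (ψ : Fml L κ) (a : Idx κ → Idx κ) (g : Crd ψ → Idx κ) (x : GBPt κ),
      ¬ Cnd z (fun R v => x (mA ⟨R, v⟩) ≠ z) ψ a (fun c => x (g c)) →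
      ∃ D : Set (Idx κ), #D < κ ∧ ∀ y : GBPt κ, (∀ i ∈ D, y i = x i) →
        ¬ Cnd z (fun R v => y (mA ⟨R, v⟩) ≠ z) ψ a (fun c => y (g c)) := by
  intro ψ
  induction ψ with
  | eq i j =>
      intro a g x h
      refine ⟨{g PUnit.unit}, small_finite hκ (finite_singleton _), fun y hy => ?_⟩
      have h1 : y (g PUnit.unit) = x (g PUnit.unit) := hy _ rfl
      intro hc
      have hc' : (y (g PUnit.unit) ≠ z) ↔ (a i = a j) := hc
      exact h (show (x (g PUnit.unit) ≠ z) ↔ (a i = a j) by rw [← h1]; exact hc')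
  | rel R v =>
      intro a g x h
      refine ⟨{g PUnit.unit, mA ⟨R, fun k => a (v k)⟩},
        small_finite hκ ((finite_singleton _).insert _), fun y hy => ?_⟩
      have h1 : y (g PUnit.unit) = x (g PUnit.unit) := hy _ (by simp)
      have h2 : y (mA ⟨R, fun k => a (v k)⟩) = x (mA ⟨R, fun k => a (v k)⟩) := hy _ (by simp)
      intro hc
      apply h
      show (x (g PUnit.unit) ≠ z) ↔ (x (mA ⟨R, fun k => a (v k)⟩) ≠ z)
      rw [← h1, ← h2]
      exact hc
  | not ψ ih =>
      intro a g x h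
      by_cases hB : Cnd z (fun R v => x (mA ⟨R, v⟩) ≠ z) ψ a (fun c => x (g (Sum.inr c)))
      · -- first component fails
        have hA : ¬ ((x (g (Sum.inl PUnit.unit)) ≠ z) ↔ ¬ (x (g (Sum.inr (claimC ψ))) ≠ z)) :=
          fun hA => h ⟨hA, hB⟩
        refine ⟨{g (Sum.inl PUnit.unit), g (Sum.inr (claimC ψ))},
          small_finite hκ ((finite_singleton _).insert _), fun y hy => ?_⟩
        have h1 : y (g (Sum.inl PUnit.unit)) = x (g (Sum.inl PUnit.unit)) := hy _ (by simp)
        have h2 : y (g (Sum.inr (claimC ψ))) = x (g (Sum.inr (claimC ψ))) := hy _ (by simp)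
        intro hc
        exact hA (by rw [← h1, ← h2]; exact hc.1)
      · obtain ⟨D, hD, hyD⟩ := ih a (fun c => g (Sum.inr c)) x hB
        exact ⟨D, hD, fun y hy hc => hyD y hy hc.2⟩
  | conj ι hι f ih =>
      intro a g x h
      set M := fun R v => x (mA ⟨R, v⟩) ≠ z with hM
      by_cases hC : ∀ t, Cnd z M (f t) a (fun c => x (g (Sum.inr ⟨t, c⟩)))
      · by_cases hA : ∀ t : ι, (x (g (Sum.inl true)) ≠ z) → (x (g (Sum.inr ⟨t, claimC (f t)⟩)) ≠ z)
        · -- the dite component fails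
          have hB : ¬ (if h : Nonempty ι then
              (¬ (x (g (Sum.inl true)) ≠ z) →
                ¬ (x (g (Sum.inr ⟨csur hι h (x (g (Sum.inl false))),
                    claimC (f (csur hι h (x (g (Sum.inl false)))))⟩)) ≠ z))
              else (x (g (Sum.inl true)) ≠ z)) := fun hB => h ⟨hA, hB, hC⟩
          by_cases hne : Nonempty ι
          · rw [dif_pos hne] at hB
            refine ⟨{g (Sum.inl true), g (Sum.inl false),
              g (Sum.inr ⟨csur hι hne (x (g (Sum.inl false))),
                claimC (f (csur hι hne (x (g (Sum.inl false)))))⟩)},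
              small_finite hκ (((finite_singleton _).insert _).insert _), fun y hy => ?_⟩
            have h1 : y (g (Sum.inl true)) = x (g (Sum.inl true)) := hy _ (by simp)
            have h2 : y (g (Sum.inl false)) = x (g (Sum.inl false)) := hy _ (by simp)
            have h3 : y (g (Sum.inr ⟨csur hι hne (x (g (Sum.inl false))),
                claimC (f (csur hι hne (x (g (Sum.inl false)))))⟩)) =
                x (g (Sum.inr ⟨csur hι hne (x (g (Sum.inl false))),
                claimC (f (csur hι hne (x (g (Sum.inl false)))))⟩)) := hy _ (by simp)
            intro hc
            have hcB := hc.2.1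
            rw [dif_pos hne] at hcB
            have hcB' : ¬ (y (g (Sum.inl true)) ≠ z) →
                ¬ (y (g (Sum.inr ⟨csur hι hne (y (g (Sum.inl false))),
                    claimC (f (csur hι hne (y (g (Sum.inl false)))))⟩)) ≠ z) := hcB
            rw [h2] at hcB'
            refine hB (fun hP => ?_)
            have h5 := hcB' (by rw [h1]; exact hP)
            rwa [h3] at h5
          · rw [dif_neg hne] at hB
            refine ⟨{g (Sum.inl true)}, small_finite hκ (finite_singleton _), fun y hy => ?_⟩
            have h1 : y (g (Sum.inl true)) = x (g (Sum.inl true)) := hy _ rfl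
            intro hc
            have hcB := hc.2.1
            rw [dif_neg hne] at hcB
            have hcB' : y (g (Sum.inl true)) ≠ z := hcB
            rw [h1] at hcB'
            exact hB hcB'
        · push_neg at hA
          obtain ⟨t, ht1, ht2⟩ := hA
          refine ⟨{g (Sum.inl true), g (Sum.inr ⟨t, claimC (f t)⟩)},
            small_finite hκ ((finite_singleton _).insert _), fun y hy => ?_⟩
          have h1 : y (g (Sum.inl true)) = x (g (Sum.inl true)) := hy _ (by simp)
          have h2 : y (g (Sum.inr ⟨t, claimC (f t)⟩)) = x (g (Sum.inr ⟨t, claimC (f t)⟩)) :=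
            hy _ (by simp)
          intro hc
          have h4 : (y (g (Sum.inr ⟨t, claimC (f t)⟩)) ≠ z) :=
            hc.1 t (show (y (g (Sum.inl true)) ≠ z) by rw [h1]; exact ht1)
          rw [h2] at h4
          exact h4 ht2
      · push_neg at hC
        obtain ⟨t, ht⟩ := hC
        obtain ⟨D, hD, hyD⟩ := ih t a (fun c => g (Sum.inr ⟨t, c⟩)) x ht
        exact ⟨D, hD, fun y hy hc => hyD y hy (hc.2.2 t)⟩
  | ex V hV ψ ih =>
      intro a g x h
      set M := fun R v => x (mA ⟨R, v⟩) ≠ z with hM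
      by_cases hC : ∀ v : ↥V → Idx κ, Cnd z M ψ (ovr a v) (fun c => x (g (Sum.inr ⟨v, c⟩)))
      · by_cases hB : ∀ v : ↥V → Idx κ, ¬ (x (g (Sum.inl (Sum.inl PUnit.unit))) ≠ z) →
            ¬ (x (g (Sum.inr ⟨v, claimC ψ⟩)) ≠ z)
        · -- first component fails
          have hA : ¬ ((x (g (Sum.inl (Sum.inl PUnit.unit))) ≠ z) →
              (x (g (Sum.inr ⟨fun i => x (g (Sum.inl (Sum.inr i))), claimC ψ⟩)) ≠ z)) :=
            fun hA => h ⟨hA, hB, hC⟩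
          refine ⟨insert (g (Sum.inl (Sum.inl PUnit.unit)))
            (insert (g (Sum.inr ⟨fun i => x (g (Sum.inl (Sum.inr i))), claimC ψ⟩))
              (Set.range fun i : ↥V => g (Sum.inl (Sum.inr i)))), ?_, fun y hy => ?_⟩
          · refine lt_of_le_of_lt Cardinal.mk_insert_le ?_
            refine Cardinal.add_lt_of_lt hκ ?_ (lt_of_lt_of_le Cardinal.one_lt_aleph0 hκ)
            refine lt_of_le_of_lt Cardinal.mk_insert_le ?_
            exact Cardinal.add_lt_of_lt hκ (lt_of_le_of_lt Cardinal.mk_range_le hV)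
              (lt_of_lt_of_le Cardinal.one_lt_aleph0 hκ)
          · have h1 : y (g (Sum.inl (Sum.inl PUnit.unit))) = x (g (Sum.inl (Sum.inl PUnit.unit))) :=
              hy _ (by simp)
            have hw : (fun i : ↥V => y (g (Sum.inl (Sum.inr i)))) =
                (fun i : ↥V => x (g (Sum.inl (Sum.inr i)))) := by
              funext i
              exact hy _ (Set.mem_insert_iff.mpr (Or.inr (Set.mem_insert_iff.mpr
                (Or.inr ⟨i, rfl⟩))))
            have h2 : y (g (Sum.inr ⟨fun i => x (g (Sum.inl (Sum.inr i))), claimC ψ⟩)) =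
                x (g (Sum.inr ⟨fun i => x (g (Sum.inl (Sum.inr i))), claimC ψ⟩)) :=
              hy _ (by simp)
            intro hc
            have hcA : (y (g (Sum.inl (Sum.inl PUnit.unit))) ≠ z) →
                (y (g (Sum.inr ⟨fun i => y (g (Sum.inl (Sum.inr i))), claimC ψ⟩)) ≠ z) := hc.1
            rw [hw] at hcA
            refine hA (fun hP => ?_)
            have h5 := hcA (by rw [h1]; exact hP)
            rwa [h2] at h5
        · push_neg at hB
          obtain ⟨v, hv1, hv2⟩ := hB
          refine ⟨{g (Sum.inl (Sum.inl PUnit.unit)), g (Sum.inr ⟨v, claimC ψ⟩)},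
            small_finite hκ ((finite_singleton _).insert _), fun y hy => ?_⟩
          have h1 : y (g (Sum.inl (Sum.inl PUnit.unit))) = x (g (Sum.inl (Sum.inl PUnit.unit))) :=
            hy _ (by simp)
          have h2 : y (g (Sum.inr ⟨v, claimC ψ⟩)) = x (g (Sum.inr ⟨v, claimC ψ⟩)) := hy _ (by simp)
          intro hc
          have h4 : ¬ (y (g (Sum.inr ⟨v, claimC ψ⟩)) ≠ z) :=
            hc.2.1 v (show ¬ (y (g (Sum.inl (Sum.inl PUnit.unit))) ≠ z) by
              rw [h1, hv1]; exact fun hne' => hne' rfl)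
          rw [h2] at h4
          exact h4 hv2
      · push_neg at hC
        obtain ⟨v, hv⟩ := hC
        obtain ⟨D, hD, hyD⟩ := ih (ovr a v) (fun c => g (Sum.inr ⟨v, c⟩)) x hv
        exact ⟨D, hD, fun y hy hc => hyD y hy (hc.2.2 v)⟩

end Stmt16
namespace Stmt16
open Cardinal Set Classical

/-- An embedding of the global coordinate index into `Idx κ`. -/
lemma gidx_emb {κ : Cardinal.{0}} (hκ : ℵ₀ ≤ κ) (hκκ : κ ^< κ = κ)
    (L : RelLang) (hL : Cardinal.mk L.Sym ≤ κ)
    (L₂ : RelLang) (hL₂ : Cardinal.mk L₂.Sym ≤ κ)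
    (φ : Fml (L.sum L₂) κ) (F : Set (Fml L κ)) (hF : IsFragment κ F) :
    Nonempty (((Σ χ : ↥F, Crd (χ.1 : Fml L κ)) ⊕
      ULift.{1} ((Crd φ) ⊕ (Σ R : (L.sum L₂).Sym, (Fin ((L.sum L₂).ar R) → Idx κ)))) ↪ Idx κ) := by
  have hκ' : ℵ₀ ≤ Cardinal.lift.{1} κ := Cardinal.aleph0_le_lift.mpr hκ
  have c1 : #(Σ χ : ↥F, Crd (χ.1 : Fml L κ)) ≤ Cardinal.lift.{1} κ := by
    rw [Cardinal.mk_sigma]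
    refine le_trans (Cardinal.sum_le_sum _ (fun _ => κ) fun χ => crd_le hκ hκκ χ.1) ?_
    rw [Cardinal.sum_const, Cardinal.lift_id', hF.card]
    exact le_of_eq (Cardinal.mul_eq_self hκ')
  have c2 : #((Crd φ) ⊕ (Σ R : (L.sum L₂).Sym, (Fin ((L.sum L₂).ar R) → Idx κ))) ≤ κ := by
    rw [Cardinal.mk_sum, Cardinal.lift_id, Cardinal.lift_id]
    have h1 : #(Σ R : (L.sum L₂).Sym, (Fin ((L.sum L₂).ar R) → Idx κ)) ≤ κ := by
      rw [Cardinal.mk_sigma]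
      refine le_trans (Cardinal.sum_le_sum _ (fun _ => κ) fun R => ?_) ?_
      · calc #(Fin ((L.sum L₂).ar R) → Idx κ)
            = #(Idx κ) ^ #(Fin ((L.sum L₂).ar R)) := (Cardinal.power_def _ _).symm
          _ = κ ^ ((L.sum L₂).ar R : Cardinal) := by rw [mk_Idx, Cardinal.mk_fin]
          _ ≤ κ := Cardinal.power_nat_le hκ
      · rw [Cardinal.sum_const']
        have hsym : #(L.sum L₂).Sym ≤ κ := by
          show #(L.Sym ⊕ L₂.Sym) ≤ κ
          rw [Cardinal.mk_sum, Cardinal.lift_id, Cardinal.lift_id]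
          exact le_trans (add_le_add hL hL₂) (le_of_eq (Cardinal.add_eq_self hκ))
        exact le_trans (mul_le_mul' hsym le_rfl) (le_of_eq (Cardinal.mul_eq_self hκ))
    exact le_trans (add_le_add (crd_le hκ hκκ φ) h1) (le_of_eq (Cardinal.add_eq_self hκ))
  rw [← Cardinal.lift_mk_le']
  rw [Cardinal.mk_sum, Cardinal.mk_uLift, Cardinal.lift_id, Cardinal.lift_id']
  have : Cardinal.lift.{1, 0} #(Idx κ) = Cardinal.lift.{1} κ := by rw [mk_Idx]
  rw [Cardinal.lift_id, this]
  calc #(Σ χ : ↥F, Crd (χ.1 : Fml L κ)) + Cardinal.lift.{1} #((Crd φ) ⊕ _)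
      ≤ Cardinal.lift.{1} κ + Cardinal.lift.{1} κ := by
        refine add_le_add c1 ?_
        exact (Cardinal.lift_le).mpr c2
    _ = Cardinal.lift.{1} κ := Cardinal.add_eq_self hκ'

end Stmt16
namespace Stmt16
open Cardinal Set Classical

/-- Main case of stmt_16 : `κ` infinite. -/
lemma main (κ : Cardinal.{0}) (hκ : ℵ₀ ≤ κ) (hκκ : κ ^< κ = κ)
    (L : RelLang) (hL : Cardinal.mk L.Sym ≤ κ)
    (L₂ : RelLang) (hL₂ : Cardinal.mk L₂.Sym ≤ κ)
    (φ : Fml (L.sum L₂) κ)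
    (F : Set (Fml L κ)) (hF : IsFragment κ F) :
    KAnalyticIn κ (cantF κ F) (iF κ F '' ModPsi L₂ φ) := by
  classical
  haveI : Infinite (Idx κ) := infinite_Idx hκ
  obtain ⟨z, o, hzo'⟩ := exists_pair_ne (Idx κ)
  have hzo : o ≠ z := hzo'.symm
  obtain ⟨e⟩ := gidx_emb hκ hκκ L hL L₂ hL₂ φ F hF
  set mA : (Σ R : (L.sum L₂).Sym, (Fin ((L.sum L₂).ar R) → Idx κ)) → Idx κ :=
    fun s => e (Sum.inr (ULift.up (Sum.inr s))) with hmA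
  set mAL : (Σ R : L.Sym, (Fin (L.ar R) → Idx κ)) → Idx κ :=
    fun s => mA ⟨Sum.inl s.1, s.2⟩ with hmAL
  set gφ : Crd φ → Idx κ := fun c => e (Sum.inr (ULift.up (Sum.inl c))) with hgφ
  set gχ : (χ : ↥F) → Crd (χ.1 : Fml L κ) → Idx κ := fun χ c => e (Sum.inl ⟨χ, c⟩) with hgχ
  set f : GBPt κ → (↥F → Prop) := fun x χ => x (gχ χ (claimC χ.1)) ≠ z with hf
  set C : Set (GBPt κ) :=
    {x | (∀ χ : ↥F, Cnd z (fun R v => x (mAL ⟨R, v⟩) ≠ z) χ.1 id (fun c => x (gχ χ c))) ∧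
      Cnd z (fun R v => x (mA ⟨R, v⟩) ≠ z) φ id (fun c => x (gφ c)) ∧
      (x (gφ (claimC φ)) ≠ z)} with hC
  refine ⟨C, ?_, f, ?_, ?_⟩
  · -- C is closed
    have l1 : ∀ χ : ↥F, LocClosed κ
        {x : GBPt κ | Cnd z (fun R v => x (mAL ⟨R, v⟩) ≠ z) χ.1 id (fun c => x (gχ χ c))} :=
      fun χ x hx => cnd_loc hκ z mAL χ.1 id (gχ χ) x hx
    have l2 : LocClosed κ
        {x : GBPt κ | Cnd z (fun R v => x (mA ⟨R, v⟩) ≠ z) φ id (fun c => x (gφ c))} :=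
      fun x hx => cnd_loc hκ z mA φ id gφ x hx
    have l3 : LocClosed κ {x : GBPt κ | x (gφ (claimC φ)) ≠ z} := by
      intro x hx
      refine ⟨{gφ (claimC φ)}, small_finite hκ (finite_singleton _), fun y hy hc => hx ?_⟩
      have hcc : y (gφ (claimC φ)) ≠ z := hc
      show x (gφ (claimC φ)) ≠ z
      rw [← hy _ rfl]
      exact hcc
    have hCeq : C = (⋂ χ : ↥F,
        {x : GBPt κ | Cnd z (fun R v => x (mAL ⟨R, v⟩) ≠ z) χ.1 id (fun c => x (gχ χ c))}) ∩
        ({x : GBPt κ | Cnd z (fun R v => x (mA ⟨R, v⟩) ≠ z) φ id (fun c => x (gφ c))} ∩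
         {x : GBPt κ | x (gφ (claimC φ)) ≠ z}) := by
      ext x
      simp only [hC, Set.mem_setOf_eq, Set.mem_inter_iff, Set.mem_iInter]
    rw [hCeq]
    exact isClosed_of_locClosed hκ hκκ ((LocClosed.iInter l1).inter (l2.inter l3))
  · -- f is continuous
    rw [cantF, continuous_generateFrom_iff]
    rintro s ⟨P, gg, hP, rfl⟩
    apply isOpen_of_locOpen hκ hκκ
    intro x hx
    refine ⟨Set.range (fun p : ↥P => gχ p.1 (claimC (p.1.1 : Fml L κ))), ?_, ?_⟩
    · have h1 := Cardinal.mk_range_le_lift (f := fun p : ↥P => gχ p.1 (claimC (p.1.1 : Fml L κ)))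
      rw [Cardinal.lift_id'] at h1
      exact Cardinal.lift_lt.mp (lt_of_le_of_lt h1 hP)
    · intro y hy
      intro p
      have hcoord : y (gχ p.1 (claimC (p.1.1 : Fml L κ))) =
          x (gχ p.1 (claimC (p.1.1 : Fml L κ))) := hy _ ⟨p, rfl⟩
      show f y p.1 = gg p
      have : f y p.1 = f x p.1 := by simp only [hf]; rw [hcoord]
      rw [this]
      exact hx p
  · -- image identity
    apply Set.Subset.antisymm
    · -- X ⊆ f '' C
      rintro _ ⟨M, hM, rfl⟩
      obtain ⟨M', hM'red, hM'sat⟩ := hM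
      -- witnesses
      choose wchi hwchi using fun χ : ↥F => complete hzo M (χ.1 : Fml L κ) id
      obtain ⟨wφ, hwφ⟩ := complete hzo M' φ id
      -- build the point x
      set data : ((Σ χ : ↥F, Crd (χ.1 : Fml L κ)) ⊕
          ULift.{1} ((Crd φ) ⊕ (Σ R : (L.sum L₂).Sym, (Fin ((L.sum L₂).ar R) → Idx κ)))) →
          Idx κ :=
        Sum.elim (fun p => wchi p.1 p.2)
          (fun u => Sum.elim wφ (fun s => enc z o (M' s.1 s.2)) u.down) with hdata
      set x : GBPt κ := fun j => if h : ∃ gi, e gi = j then data (Classical.choose h) else z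
        with hx
      have hxe : ∀ gi, x (e gi) = data gi := by
        intro gi
        have hex : ∃ gi', e gi' = e gi := ⟨gi, rfl⟩
        rw [hx]
        simp only [dif_pos hex]
        congr 1
        exact e.injective (Classical.choose_spec hex)
      have hMx : (fun R v => x (mA ⟨R, v⟩) ≠ z) = M' := by
        funext R v
        have : x (mA ⟨R, v⟩) = enc z o (M' R v) := hxe _
        rw [this]
        exact propext (enc_spec hzo _)
      have hMLx : (fun R v => x (mAL ⟨R, v⟩) ≠ z) = M := by
        funext R v
        have : x (mAL ⟨R, v⟩) = enc z o (M' (Sum.inl R) v) := hxe _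
        rw [this, hM'red R v]
        exact propext (enc_spec hzo _)
      have hgx : ∀ χ : ↥F, (fun c => x (gχ χ c)) = wchi χ := by
        intro χ; funext c; exact hxe (Sum.inl ⟨χ, c⟩)
      have hgxφ : (fun c => x (gφ c)) = wφ := by
        funext c; exact hxe (Sum.inr (ULift.up (Sum.inl c)))
      have hxC : x ∈ C := by
        refine ⟨fun χ => ?_, ?_, ?_⟩
        · rw [hMLx, hgx χ]; exact hwchi χ
        · rw [hMx, hgxφ]; exact hwφ
        · have : x (gφ (claimC φ)) = wφ (claimC φ) := hxe _
          rw [this]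
          exact (sound z M' φ id wφ hwφ).mpr hM'sat
      refine ⟨x, hxC, ?_⟩
      funext χ
      show f x χ = iF κ F M χ
      have h1 : x (gχ χ (claimC (χ.1 : Fml L κ))) = wchi χ (claimC (χ.1 : Fml L κ)) := hxe _
      have h2 : (wchi χ (claimC (χ.1 : Fml L κ)) ≠ z) ↔ Sat M (χ.1 : Fml L κ) id :=
        sound z M (χ.1 : Fml L κ) id (wchi χ) (hwchi χ)
      show (x (gχ χ (claimC (χ.1 : Fml L κ))) ≠ z) = Sat M (χ.1 : Fml L κ) id
      rw [h1]
      exact propext h2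
    · -- f '' C ⊆ X
      rintro _ ⟨x, hxC, rfl⟩
      obtain ⟨h1, h2, h3⟩ := hxC
      refine ⟨(fun R v => x (mAL ⟨R, v⟩) ≠ z), ⟨(fun R v => x (mA ⟨R, v⟩) ≠ z),
        fun R v => rfl, (sound z _ φ id _ h2).mp h3⟩, ?_⟩
      funext χ
      show iF κ F _ χ = f x χ
      exact propext (sound z _ (χ.1 : Fml L κ) id _ (h1 χ)).symm

end Stmt16
namespace Stmt16
open Cardinal Set Classical

/-- Number of leading negations. -/
def ndepth {L : RelLang} {κ : Cardinal.{0}} : Fml L κ → ℕ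
  | .not ψ => ndepth ψ + 1
  | _ => 0

lemma ndepth_iter {L : RelLang} {κ : Cardinal.{0}} (ψ : Fml L κ) :
    ∀ n : ℕ, ndepth (Fml.not^[n] ψ) = n + ndepth ψ := by
  intro n
  induction n with
  | zero => simp
  | succ n ih =>
      rw [Function.iterate_succ_apply']
      show ndepth (Fml.not^[n] ψ) + 1 = n + 1 + ndepth ψ
      omega
      
lemma no_finite_fragment {L : RelLang} {κ : Cardinal.{0}} (hpos : κ ≠ 0) (hfin : κ < ℵ₀)
    {F : Set (Fml L κ)} (hF : IsFragment κ F) : False := by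
  classical
  have hne : Nonempty (Idx κ) := by
    rw [← Cardinal.mk_ne_zero_iff, mk_Idx]
    exact hpos
  obtain ⟨i0⟩ := hne
  have hmem : ∀ n : ℕ, Fml.not^[n] (Fml.eq i0 i0) ∈ F := by
    intro n
    induction n with
    | zero => exact hF.atom _ (Or.inl ⟨i0, i0, rfl⟩)
    | succ n ih =>
        rw [Function.iterate_succ_apply']
        exact hF.neg _ ih
  have hinj : Function.Injective (fun n : ℕ => (⟨Fml.not^[n] (Fml.eq i0 i0), hmem n⟩ : ↥F)) := by
    intro m n hmn
    have h1 : Fml.not^[m] (Fml.eq i0 i0) = Fml.not^[n] (Fml.eq i0 i0) := congrArg Subtype.val hmn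
    have h2 := congrArg ndepth h1
    rw [ndepth_iter, ndepth_iter] at h2
    omega
  haveI : Infinite ↥F := Infinite.of_injective _ hinj
  have h1 : ℵ₀ ≤ #↥F := Cardinal.aleph0_le_mk ↥F
  rw [hF.card] at h1
  have h2 : Cardinal.lift.{1} κ < ℵ₀ := by
    rw [Cardinal.lift_lt_aleph0]
    exact hfin
  exact absurd (h1.trans_lt h2) (lt_irrefl _)

end Stmt16

/-- Corollary "models2": `X^ψ_F` is a κ-analytic subset of `^F2`. -/
theorem stmt_16 (κ : Cardinal.{0}) (hκ : ℵ₀ ≤ κ) (hκκ : κ ^< κ = κ)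
    (L : RelLang) (hL : Cardinal.mk L.Sym ≤ κ)
    (L₂ : RelLang) (hL₂ : Cardinal.mk L₂.Sym ≤ κ)
    (φ : Fml (L.sum L₂) κ) (hφ : φ.freeVars = ∅)
    (F : Set (Fml L κ)) (hF : IsFragment κ F) :
    KAnalyticIn κ (cantF κ F) (iF κ F '' ModPsi L₂ φ) := by
  classical
  rcases le_or_gt Cardinal.aleph0 κ with h | h
  · exact Stmt16.main κ h hκκ L hL L₂ hL₂ φ F hF
  · by_cases h0 : κ = 0
    · -- `F` is empty, so the target space is a subsingleton
      subst h0
      haveI hFe : IsEmpty ↥F := by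
        rw [← Cardinal.mk_eq_zero_iff, hF.card]
        simp
      have hsub : ∀ y y' : ↥F → Prop, y = y' := fun y y' =>
        funext fun χ => hFe.elim χ
      by_cases hX : (iF 0 F '' ModPsi L₂ φ) = ∅
      · refine ⟨∅, ?_, fun _ _ => True, ?_, ?_⟩
        · letI := kBaire 0
          exact isClosed_empty
        · letI := kBaire 0
          letI := cantF 0 F
          exact continuous_const
        · rw [hX, Set.image_empty]
      · obtain ⟨y₀, hy₀⟩ := Set.nonempty_iff_ne_empty.mpr hX
        refine ⟨Set.univ, ?_, fun _ => y₀, ?_, ?_⟩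
        · letI := kBaire 0
          exact isClosed_univ
        · letI := kBaire 0
          letI := cantF 0 F
          exact continuous_const
        · rw [Set.image_univ]
          haveI : Nonempty (GBPt 0) := ⟨fun i => i⟩
          have : Set.range (fun _ : GBPt 0 => y₀) = {y₀} := Set.range_const
          rw [this]
          apply Set.Subset.antisymm
          · intro y hy
            exact (hsub y y₀)
          · intro y hy
            rw [hy]
            exact hy₀
    · exact absurd (Stmt16.no_finite_fragment h0 h hF) not_false
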